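/- Let A be a nonempty finite set with n = |A| elements, let φ be a regularizer satisfying Assumption 2, and let Q : A → ℝ. Then the maximizers of the per-state regularized objective converge to the uniform distribution as the regularization coefficient tends to infinity: for every ε > 0 there exists Λ > 0 such that for every λ ≥ Λ, every maximizer p ∈ Δ_A of F_λ(p) = ∑_a (p a · Q a + λ·f_φ(p a)) satisfies |p a − 1/n| ≤ ε for all a ∈ A. -/

import Mathlib

open Filter

/-- A regularizer: on the interval (0,1], φ is nonincreasing, φ(1) = 0,
φ is differentiable, and `x ↦ x·φ(x)` is strictly concave. -/
def IsRegularizer (φ : ℝ → ℝ) : Prop :=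
  AntitoneOn φ (Set.Ioc 0 1) ∧ φ 1 = 0 ∧ DifferentiableOn ℝ φ (Set.Ioc 0 1) ∧
    StrictConcaveOn ℝ (Set.Ioc 0 1) (fun x => x * φ x)

/-- Assumption 2: `x·φ(x) → 0` as `x → 0⁺`. -/
def Assumption2 (φ : ℝ → ℝ) : Prop :=
  Tendsto (fun x => x * φ x) (nhdsWithin 0 (Set.Ioi 0)) (nhds 0)

/-- The derivative of `f_φ(x) = x·φ(x)` on (0,1], namely `f'_φ(x) = φ(x) + x·φ'(x)`. -/
noncomputable def fderivPhi (φ : ℝ → ℝ) (x : ℝ) : ℝ :=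
  φ x + x * derivWithin φ (Set.Ioc 0 1) x

set_option linter.unusedSectionVars false
set_option linter.unusedVariables false

/-- Nonstrict concavity inequality against the zero endpoint. -/
lemma keyA (φ : ℝ → ℝ) (hφ : IsRegularizer φ) (hA2 : Assumption2 φ)
    {y s : ℝ} (hy : y ∈ Set.Ioc 0 1) (hs : s ∈ Set.Ioo 0 1) :
    s * (y * φ y) ≤ (s * y) * φ (s * y) := by
  obtain ⟨hy0, hy1⟩ := hy
  obtain ⟨hs0, hs1⟩ := hs
  have hsy0 : 0 < s * y := mul_pos hs0 hy0
  have hsyy : s * y < y := by nlinarith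
  set l := nhdsWithin (0:ℝ) (Set.Ioo 0 (s*y)) with hl
  have hne : l.NeBot := by
    rw [hl]
    apply mem_closure_iff_nhdsWithin_neBot.mp
    rw [closure_Ioo (ne_of_lt hsy0)]
    exact ⟨le_refl 0, le_of_lt hsy0⟩
  have t1 : Tendsto (fun z : ℝ => z * φ z) l (nhds 0) :=
    hA2.mono_left (nhdsWithin_mono 0 (fun z hz => hz.1))
  have t2 : Tendsto (fun z : ℝ => (y - s*y)/(y - z)) l (nhds ((y - s*y)/y)) := by
    have : Tendsto (fun z : ℝ => (y - s*y)/(y - z)) (nhds 0) (nhds ((y - s*y)/(y - 0))) := by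
      apply Tendsto.div tendsto_const_nhds (tendsto_const_nhds.sub tendsto_id)
      simpa using ne_of_gt hy0
    simpa using this.mono_left nhdsWithin_le_nhds
  have t3 : Tendsto (fun z : ℝ => (y - s*y)/(y - z) * (z * φ z)
      + (1 - (y - s*y)/(y - z)) * (y * φ y)) l (nhds (s * (y * φ y))) := by
    have h2 : Tendsto (fun z : ℝ => (1 - (y - s*y)/(y - z)) * (y * φ y)) l
        (nhds ((1 - (y - s*y)/y) * (y * φ y))) :=
      (tendsto_const_nhds.sub t2).mul tendsto_const_nhds
    have h3 := (t2.mul t1).add h2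
    have he : (y - s*y)/y * 0 + (1 - (y - s*y)/y) * (y * φ y) = s * (y * φ y) := by
      have : (1 - (y - s*y)/y) = s := by field_simp; ring
      rw [this]; ring
    rwa [he] at h3
  refine le_of_tendsto t3 ?_
  filter_upwards [self_mem_nhdsWithin] with z hz
  obtain ⟨hz0, hzsy⟩ := hz
  have hzy : z < y := lt_trans hzsy hsyy
  set θ := (y - s*y)/(y - z) with hθ
  have hθ0 : 0 < θ := div_pos (by nlinarith) (by linarith)
  have hθ1 : θ < 1 := by
    rw [hθ, div_lt_one (by linarith)]; linarith
  have hcomb : θ * z + (1 - θ) * y = s * y := by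
    have hyz : y - z ≠ 0 := ne_of_gt (by linarith)
    have h := div_mul_cancel₀ (y - s*y) hyz
    rw [hθ]
    linear_combination (-1 : ℝ) * h
  have := hφ.2.2.2.2 (x := z) ⟨hz0, by linarith⟩ (y := y) ⟨hy0, hy1⟩
    (ne_of_lt hzy) hθ0 (by linarith : (0:ℝ) < 1 - θ) (by ring)
  simp only [smul_eq_mul] at this
  rw [hcomb] at this
  linarith

/-- Strict concavity inequality against the zero endpoint. -/
lemma keyB (φ : ℝ → ℝ) (hφ : IsRegularizer φ) (hA2 : Assumption2 φ)
    {y s : ℝ} (hy : y ∈ Set.Ioc 0 1) (hs : s ∈ Set.Ioo 0 1) :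
    s * (y * φ y) < (s * y) * φ (s * y) := by
  obtain ⟨hy0, hy1⟩ := hy
  obtain ⟨hs0, hs1⟩ := hs
  have hsy0 : 0 < s * y := mul_pos hs0 hy0
  have hsyy : s * y < y := by nlinarith
  set w := s * y / 2 with hw
  have hw0 : 0 < w := by positivity
  have hwsy : w < s * y := by rw [hw]; linarith
  have hwy : w < y := lt_trans hwsy hsyy
  have hyw : y - w ≠ 0 := ne_of_gt (by linarith)
  set θ := (y - s*y)/(y - w) with hθ
  have hθ0 : 0 < θ := div_pos (by linarith) (by linarith)
  have hθ1 : θ < 1 := by rw [hθ, div_lt_one (by linarith)]; linarith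
  have hcomb : θ * w + (1 - θ) * y = s * y := by
    have h := div_mul_cancel₀ (y - s*y) hyw
    rw [hθ]
    linear_combination (-1 : ℝ) * h
  -- strict concavity between w and y
  have hstrict := hφ.2.2.2.2 (x := w) ⟨hw0, by linarith⟩ (y := y) ⟨hy0, hy1⟩
    (ne_of_lt hwy) hθ0 (by linarith : (0:ℝ) < 1 - θ) (by ring)
  simp only [smul_eq_mul] at hstrict
  rw [hcomb] at hstrict
  -- keyA bound for g(w)
  have hwyr : w / y ∈ Set.Ioo (0:ℝ) 1 := ⟨by positivity, (div_lt_one hy0).mpr hwy⟩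
  have hA := keyA φ hφ hA2 ⟨hy0, hy1⟩ hwyr
  rw [div_mul_cancel₀ w (ne_of_gt hy0)] at hA
  -- coefficient identity : θ * (w/y) + (1 - θ) = s
  have hco : θ * (w/y) + (1 - θ) = s := by
    rw [hθ]
    field_simp
    ring
  have hco2 : θ * (w/y * (y * φ y)) + (1 - θ) * (y * φ y) = s * (y * φ y) := by
    linear_combination (y * φ y) * hco
  linarith [mul_le_mul_of_nonneg_left hA (le_of_lt hθ0)]

/-- `x ↦ x·φ(x)` is strictly concave on the closed interval `[0,1]`. -/
lemma gStrictConcave (φ : ℝ → ℝ) (hφ : IsRegularizer φ) (hA2 : Assumption2 φ) :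
    StrictConcaveOn ℝ (Set.Icc 0 1) (fun x => x * φ x) := by
  refine ⟨convex_Icc 0 1, ?_⟩
  rintro x ⟨hx0, hx1⟩ y ⟨hy0, hy1⟩ hxy a b ha hb hab
  simp only [smul_eq_mul]
  rcases eq_or_lt_of_le hx0 with hx | hx
  · -- x = 0
    have hy : 0 < y := lt_of_le_of_ne hy0 (fun h => hxy (by rw [← hx, ← h]))
    have hb1 : b < 1 := by linarith
    have := keyB φ hφ hA2 (s := b) ⟨hy, hy1⟩ ⟨hb, hb1⟩
    rw [← hx]
    simpa using this
  · rcases eq_or_lt_of_le hy0 with hy | hy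
    · -- y = 0
      have ha1 : a < 1 := by linarith
      have := keyB φ hφ hA2 (s := a) ⟨hx, hx1⟩ ⟨ha, ha1⟩
      rw [← hy]
      simpa using this
    · -- both positive: interior strict concavity
      have := hφ.2.2.2.2 (x := x) ⟨hx, hx1⟩ (y := y) ⟨hy, hy1⟩ hxy ha hb hab
      simpa using this

/-- `x ↦ x·φ(x)` is continuous on `[0,1]`. -/
lemma gContinuous (φ : ℝ → ℝ) (hφ : IsRegularizer φ) (hA2 : Assumption2 φ) :
    ContinuousOn (fun x => x * φ x) (Set.Icc 0 1) := by
  intro x hx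
  rcases eq_or_lt_of_le hx.1 with hx0 | hx0
  · -- x = 0
    rw [← hx0]
    unfold ContinuousWithinAt
    have hsub : Set.Icc (0:ℝ) 1 ⊆ {0} ∪ Set.Ioi 0 := by
      rintro z ⟨hz0, _⟩
      rcases eq_or_lt_of_le hz0 with h | h
      · exact Or.inl (by simp [← h])
      · exact Or.inr h
    have hle : nhdsWithin (0:ℝ) (Set.Icc 0 1) ≤ pure 0 ⊔ nhdsWithin 0 (Set.Ioi 0) := by
      rw [← nhdsWithin_singleton, ← nhdsWithin_union]
      exact nhdsWithin_mono 0 hsub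
    have h1 : Tendsto (fun z : ℝ => z * φ z) (pure 0) (nhds ((0:ℝ) * φ 0)) := by
      simpa using tendsto_pure_nhds (fun z : ℝ => z * φ z) 0
    have h2 : Tendsto (fun z : ℝ => z * φ z) (nhdsWithin 0 (Set.Ioi 0))
        (nhds ((0:ℝ) * φ 0)) := by simpa [Assumption2] using hA2
    exact (h1.sup h2).mono_left hle
  · -- x > 0
    have hcont : ContinuousOn (fun z : ℝ => z * φ z) (Set.Ioc 0 1) :=
      (continuousOn_id.mul hφ.2.2.1.continuousOn)
    have hmem : Set.Ioc (0:ℝ) 1 ∈ nhdsWithin x (Set.Icc 0 1) := by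
      rw [mem_nhdsWithin]
      exact ⟨Set.Ioi 0, isOpen_Ioi, hx0, fun z hz => ⟨hz.1, hz.2.2⟩⟩
    exact (hcont x ⟨hx0, hx.2⟩).mono_of_mem_nhdsWithin hmem

section Simplex

variable {A : Type*} [Fintype A] [Nonempty A]

lemma card_pos' : (0:ℝ) < (Fintype.card A : ℝ) := by
  exact_mod_cast Fintype.card_pos

lemma uniform_mem : (fun _ : A => (Fintype.card A : ℝ)⁻¹) ∈ stdSimplex ℝ A := by
  constructor
  · intro a
    positivity
  · rw [Finset.sum_const, Finset.card_univ, nsmul_eq_mul]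
    exact mul_inv_cancel₀ (ne_of_gt card_pos')

lemma mem_Icc_of_simplex {p : A → ℝ} (hp : p ∈ stdSimplex ℝ A) (a : A) :
    p a ∈ Set.Icc (0:ℝ) 1 := by
  refine ⟨hp.1 a, ?_⟩
  calc p a ≤ ∑ b, p b := Finset.single_le_sum (fun b _ => hp.1 b) (Finset.mem_univ a)
  _ = 1 := hp.2

/-- strict Jensen: non-uniform distributions have strictly smaller `∑ g(p a)`. -/
lemma sum_g_lt (φ : ℝ → ℝ) (hφ : IsRegularizer φ) (hA2 : Assumption2 φ)
    {p : A → ℝ} (hp : p ∈ stdSimplex ℝ A)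
    (hne : p ≠ fun _ : A => (Fintype.card A : ℝ)⁻¹) :
    ∑ a, p a * φ (p a) <
      ∑ a : A, ((Fintype.card A : ℝ)⁻¹ * φ ((Fintype.card A : ℝ)⁻¹)) := by
  set n : ℝ := (Fintype.card A : ℝ) with hn
  have hn0 : (0:ℝ) < n := card_pos'
  have hnonconst : ∃ j ∈ Finset.univ, ∃ k ∈ (Finset.univ : Finset A), p j ≠ p k := by
    by_contra h
    push_neg at h
    apply hne
    have a₀ := Classical.arbitrary A
    have hall : ∀ a, p a = p a₀ := fun a => h a (Finset.mem_univ a) a₀ (Finset.mem_univ a₀)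
    have hsum : ∑ a, p a = n * p a₀ := by
      rw [Finset.sum_congr rfl (fun a _ => hall a), Finset.sum_const, Finset.card_univ,
        nsmul_eq_mul, hn]
    have : p a₀ = n⁻¹ := by
      have h1 : n * p a₀ = 1 := by rw [← hsum]; exact hp.2
      field_simp at h1 ⊢
      linarith
    funext a
    rw [hall a, this]
  have hJ := (gStrictConcave φ hφ hA2).lt_map_sum (t := Finset.univ)
    (w := fun _ : A => n⁻¹) (p := p)
    (fun _ _ => by positivity)
    (by rw [Finset.sum_const, Finset.card_univ, nsmul_eq_mul]
        exact mul_inv_cancel₀ (ne_of_gt hn0))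
    (fun a _ => mem_Icc_of_simplex hp a) hnonconst
  simp only [smul_eq_mul] at hJ
  have hsum2 : ∑ a, n⁻¹ * p a = n⁻¹ := by
    rw [← Finset.mul_sum, hp.2, mul_one]
  rw [hsum2] at hJ
  have hmul := mul_lt_mul_of_pos_left hJ hn0
  rw [Finset.mul_sum] at hmul
  calc ∑ a, p a * φ (p a) = ∑ a, n * (n⁻¹ * (p a * φ (p a))) := by
        apply Finset.sum_congr rfl
        intro a _
        field_simp
  _ < n * (n⁻¹ * φ n⁻¹) := by exact hmul
  _ = ∑ _a : A, (n⁻¹ * φ n⁻¹) := by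
        rw [Finset.sum_const, Finset.card_univ, nsmul_eq_mul, ← mul_assoc,
          mul_inv_cancel₀ (ne_of_gt hn0), one_mul]

/-- The compactness-based gap lemma. -/
lemma gap_lemma (φ : ℝ → ℝ) (hφ : IsRegularizer φ) (hA2 : Assumption2 φ) :
    ∀ ε > 0, ∃ δ > 0, ∀ p ∈ stdSimplex ℝ A,
      (∑ a : A, ((Fintype.card A : ℝ)⁻¹ * φ ((Fintype.card A : ℝ)⁻¹)))
        - (∑ a, p a * φ (p a)) ≤ δ →
      ∀ a, |p a - (Fintype.card A : ℝ)⁻¹| ≤ ε := by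
  intro ε hε
  set n : ℝ := (Fintype.card A : ℝ) with hn
  set G : (A → ℝ) → ℝ := fun p => ∑ a, p a * φ (p a) with hG
  set Gu : ℝ := ∑ a : A, (n⁻¹ * φ n⁻¹) with hGu
  set K : Set (A → ℝ) := stdSimplex ℝ A ∩ {p | ∃ a, ε ≤ |p a - n⁻¹|} with hK
  have hGcont : ContinuousOn G (stdSimplex ℝ A) := by
    apply continuousOn_finset_sum
    intro a _
    exact (gContinuous φ hφ hA2).comp (continuous_apply a).continuousOn
      (fun p hp => mem_Icc_of_simplex hp a)
  have hKclosed : IsClosed {p : A → ℝ | ∃ a, ε ≤ |p a - n⁻¹|} := by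
    rw [Set.setOf_exists]
    exact isClosed_iUnion_of_finite (fun a => isClosed_le continuous_const
      (((continuous_apply a).sub continuous_const).abs))
  have hKcompact : IsCompact K := (isCompact_stdSimplex ℝ A).inter_right hKclosed
  rcases K.eq_empty_or_nonempty with hKe | hKne
  · refine ⟨1, one_pos, fun p hp _ a => ?_⟩
    by_contra hc
    push_neg at hc
    exact (Set.eq_empty_iff_forall_notMem.mp hKe p) ⟨hp, a, le_of_lt hc⟩
  · obtain ⟨p₀, hp₀K, hp₀max⟩ := hKcompact.exists_isMaxOn hKne
      (hGcont.mono Set.inter_subset_left)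
    have hp₀ne : p₀ ≠ fun _ : A => n⁻¹ := by
      intro h
      obtain ⟨a, ha⟩ := hp₀K.2
      rw [h] at ha
      simp at ha
      linarith
    have hlt : G p₀ < Gu := sum_g_lt φ hφ hA2 hp₀K.1 hp₀ne
    refine ⟨(Gu - G p₀)/2, by linarith, fun p hp hgap a => ?_⟩
    by_contra hc
    push_neg at hc
    have hpK : p ∈ K := ⟨hp, a, le_of_lt hc⟩
    have := hp₀max hpK
    simp only [Set.mem_setOf_eq] at this
    have : G p ≤ G p₀ := this
    linarith

end Simplex

/-- As the regularization coefficient tends to infinity, maximizers of the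
per-state regularized objective converge to the uniform distribution. -/
theorem maximizer_tendsto_uniform (A : Type*) [Fintype A] [Nonempty A]
    (φ : ℝ → ℝ) (hφ : IsRegularizer φ) (hA2 : Assumption2 φ) (Q : A → ℝ) :
    ∀ ε > 0, ∃ Λ > 0, ∀ lam ≥ Λ, ∀ p : A → ℝ,
      (∀ a, 0 ≤ p a) → (∑ a, p a = 1) →
      (∀ q : A → ℝ, (∀ a, 0 ≤ q a) → (∑ a, q a = 1) →
        (∑ a, (q a * Q a + lam * (q a * φ (q a)))) ≤
          ∑ a, (p a * Q a + lam * (p a * φ (p a)))) →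
      ∀ a, |p a - 1 / (Fintype.card A : ℝ)| ≤ ε := by
  intro ε hε
  obtain ⟨δ, hδ, hgap⟩ := gap_lemma (A := A) φ hφ hA2 ε hε
  set n : ℝ := (Fintype.card A : ℝ) with hn
  have hn0 : (0:ℝ) < n := card_pos'
  have hn1 : (1:ℝ) ≤ n := by
    rw [hn]
    exact_mod_cast Fintype.card_pos
  set S : ℝ := ∑ a, |Q a| with hS
  have hS0 : (0:ℝ) ≤ S := Finset.sum_nonneg (fun a _ => abs_nonneg _)
  refine ⟨(2*S+1)/δ, by positivity, fun lam hlam p hp0 hp1 hmax a => ?_⟩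
  have hpS : p ∈ stdSimplex ℝ A := ⟨hp0, hp1⟩
  have hΛ0 : (0:ℝ) < (2*S+1)/δ := by positivity
  have hlam0 : 0 < lam := lt_of_lt_of_le hΛ0 hlam
  have hu := uniform_mem (A := A)
  have h := hmax (fun _ => n⁻¹) hu.1 hu.2
  -- bound the linear parts
  have hb1 : ∑ a, p a * Q a ≤ S := by
    rw [hS]
    refine Finset.sum_le_sum (fun b _ => ?_)
    have h1 : p b ≤ 1 := (mem_Icc_of_simplex hpS b).2
    nlinarith [le_abs_self (Q b), abs_nonneg (Q b), hp0 b]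
  have hb2 : -S ≤ ∑ a : A, n⁻¹ * Q a := by
    rw [hS, ← Finset.sum_neg_distrib]
    refine Finset.sum_le_sum (fun b _ => ?_)
    have h1 : n⁻¹ ≤ 1 := by
      rw [inv_le_one_iff₀]
      right; exact hn1
    have h2 : (0:ℝ) ≤ n⁻¹ := by positivity
    nlinarith [neg_abs_le (Q b), abs_nonneg (Q b)]
  -- key gap bound
  set Gu : ℝ := ∑ _a : A, (n⁻¹ * φ n⁻¹) with hGu
  set Gp : ℝ := ∑ a, p a * φ (p a) with hGp
  have e1 : ∑ a : A, (n⁻¹ * Q a + lam * (n⁻¹ * φ n⁻¹)) = (∑ a : A, n⁻¹ * Q a) + lam * Gu := by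
    rw [Finset.sum_add_distrib, hGu, Finset.mul_sum]
  have e2 : ∑ a : A, (p a * Q a + lam * (p a * φ (p a))) = (∑ a : A, p a * Q a) + lam * Gp := by
    rw [Finset.sum_add_distrib, hGp, Finset.mul_sum]
  rw [e1, e2] at h
  have hring : lam * (Gu - Gp) = lam * Gu - lam * Gp := by ring
  have hkey : lam * (Gu - Gp) ≤ 2 * S := by linarith
  have hgap1 : Gu - Gp ≤ (2*S) / lam := (le_div_iff₀ hlam0).mpr (by linarith [hkey])
  have hgap2 : (2*S) / lam ≤ (2*S) / ((2*S+1)/δ) := by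
    gcongr
  have hgap3 : (2*S) / ((2*S+1)/δ) ≤ δ := by
    rw [div_div_eq_mul_div, div_le_iff₀ (by linarith : (0:ℝ) < 2*S+1)]
    nlinarith
  have := hgap p hpS (by linarith) a
  rwa [one_div]
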